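/- arXiv:2509.14964 — 3 statements merged into one kernel-verified Lean document; each statement's English description precedes it below -/
import Mathlib

section
/- An Apollonian network with n vertices contains exactly 3n - 8 triangles (cycles of length three). -/
open SimpleGraph

/-- The complete graph `K4` on the vertices `{0,1,2,3}` of `ℕ`. -/
def K4n : SimpleGraph ℕ where
  Adj x y := x ≠ y ∧ x < 4 ∧ y < 4
  symm := ⟨fun _ _ h => ⟨h.1.symm, h.2.2, h.2.1⟩⟩
  loopless := ⟨fun _ h => h.1 rfl⟩

/-- Add a new apex vertex `v` joined to the three vertices `a`, `b`, `c`. -/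
def addApex (G : SimpleGraph ℕ) (v a b c : ℕ) : SimpleGraph ℕ :=
  G ⊔ SimpleGraph.fromEdgeSet {s(v, a), s(v, b), s(v, c)}

/-- `ApollonianF G Fs` : `G` is an Apollonian network with set of (triangular) faces `Fs`,
built from `K4` by recursively subdividing a triangular face. -/
inductive ApollonianF : SimpleGraph ℕ → Set (Finset ℕ) → Prop
  | base : ApollonianF K4n {{0, 1, 2}, {0, 1, 3}, {0, 2, 3}, {1, 2, 3}}
  | subdivide (G : SimpleGraph ℕ) (Fs : Set (Finset ℕ)) (a b c v : ℕ) :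
      ApollonianF G Fs → ({a, b, c} : Finset ℕ) ∈ Fs →
      (∀ y, ¬ G.Adj v y) →
      ApollonianF (addApex G v a b c)
        ((Fs \ {({a, b, c} : Finset ℕ)}) ∪ {{v, a, b}, {v, a, c}, {v, b, c}})

/-- A graph (on vertex set its support) is an Apollonian network. -/
def IsApollonian (G : SimpleGraph ℕ) : Prop := ∃ Fs, ApollonianF G Fs

/-- The triangles (sets of three pairwise adjacent vertices) of `G`. -/
def triangleSet (G : SimpleGraph ℕ) : Set (Finset ℕ) :=
  {t | ∃ a b c : ℕ, t = {a, b, c} ∧ G.Adj a b ∧ G.Adj a c ∧ G.Adj b c}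

/-- A triangle is separating if deleting its vertices disconnects the graph. -/
def IsSeparatingTriangle (G : SimpleGraph ℕ) (t : Finset ℕ) : Prop :=
  t ∈ triangleSet G ∧ ¬ (G.induce (G.support \ ↑t)).Connected

/-- `G` is (isomorphic to) the complete graph on four vertices. -/
def IsK4Graph (G : SimpleGraph ℕ) : Prop :=
  ∃ s : Finset ℕ, ↑s = G.support ∧ s.card = 4 ∧ ∀ a ∈ s, ∀ b ∈ s, a ≠ b → G.Adj a b

/-- Delete the vertex `v` (and all incident edges). -/
def deleteVertex (G : SimpleGraph ℕ) (v : ℕ) : SimpleGraph ℕ where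
  Adj x y := G.Adj x y ∧ x ≠ v ∧ y ≠ v
  symm := ⟨fun _ _ h => ⟨h.1.symm, h.2.2, h.2.1⟩⟩
  loopless := ⟨fun x h => G.loopless.1 x h.1⟩

/-! ### Auxiliary lemmas -/

lemma triangle_adj {G : SimpleGraph ℕ} {t : Finset ℕ} (h : t ∈ triangleSet G) :
    ∀ x ∈ t, ∀ y ∈ t, x ≠ y → G.Adj x y := by
  obtain ⟨p, q, r, rfl, h1, h2, h3⟩ := h
  intro x hx y hy hxy
  simp only [Finset.mem_insert, Finset.mem_singleton] at hx hy
  rcases hx with rfl | rfl | rfl <;> rcases hy with rfl | rfl | rfl <;>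
    first
      | exact absurd rfl hxy
      | assumption
      | exact h1.symm
      | exact h2.symm
      | exact h3.symm

lemma triangle_card {G : SimpleGraph ℕ} {t : Finset ℕ} (h : t ∈ triangleSet G) :
    t.card = 3 := by
  obtain ⟨p, q, r, rfl, h1, h2, h3⟩ := h
  rw [Finset.card_insert_of_notMem (by simp [h1.ne, h2.ne]),
    Finset.card_insert_of_notMem (by simp [h3.ne]), Finset.card_singleton]

lemma triangle_mem_support {G : SimpleGraph ℕ} {t : Finset ℕ} (h : t ∈ triangleSet G) :
    ∀ x ∈ t, x ∈ G.support := by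
  obtain ⟨p, q, r, rfl, h1, h2, h3⟩ := h
  intro x hx
  simp only [Finset.mem_insert, Finset.mem_singleton] at hx
  rcases hx with rfl | rfl | rfl
  · exact ⟨q, h1⟩
  · exact ⟨p, h1.symm⟩
  · exact ⟨p, h2.symm⟩

lemma triangle_adj' {G : SimpleGraph ℕ} {a b c : ℕ}
    (h : ({a, b, c} : Finset ℕ) ∈ triangleSet G) : G.Adj a b ∧ G.Adj a c ∧ G.Adj b c := by
  have hcard := triangle_card h
  have hab : a ≠ b := by
    rintro rfl
    rw [Finset.insert_idem] at hcard
    have := Finset.card_insert_le a ({c} : Finset ℕ)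
    simp at this; omega
  have hac : a ≠ c := by
    rintro rfl
    rw [Finset.insert_comm, Finset.insert_eq_self.mpr (Finset.mem_singleton_self a)] at hcard
    have := Finset.card_insert_le b ({a} : Finset ℕ)
    simp at this; omega
  have hbc : b ≠ c := by
    rintro rfl
    rw [Finset.insert_eq_self.mpr (Finset.mem_singleton_self b)] at hcard
    have := Finset.card_insert_le a ({b} : Finset ℕ)
    simp at this; omega
  exact ⟨triangle_adj h a (by simp) b (by simp) hab,
    triangle_adj h a (by simp) c (by simp) hac,
    triangle_adj h b (by simp) c (by simp) hbc⟩

lemma K4n_support : K4n.support = ↑(Finset.range 4) := by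
  ext x
  simp only [SimpleGraph.mem_support, Finset.coe_range, Set.mem_Iio]
  constructor
  · rintro ⟨y, h⟩; exact h.2.1
  · intro hx
    rcases Nat.lt_or_ge x 1 with h | h
    · exact ⟨1, by omega, by omega, by omega⟩
    · exact ⟨0, by omega, by omega, by omega⟩

lemma triangleSet_K4n :
    triangleSet K4n = ↑({{0,1,2},{0,1,3},{0,2,3},{1,2,3}} : Finset (Finset ℕ)) := by
  ext t
  constructor
  · rintro ⟨a, b, c, rfl, h1, h2, h3⟩
    obtain ⟨hab, ha, hb⟩ := h1
    obtain ⟨hac, -, hc⟩ := h2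
    obtain ⟨hbc, -, -⟩ := h3
    interval_cases a <;> interval_cases b <;> interval_cases c <;> simp_all <;> decide
  · intro ht
    simp only [Finset.coe_insert, Set.mem_insert_iff, Finset.coe_singleton,
      Set.mem_singleton_iff] at ht
    rcases ht with rfl | rfl | rfl | rfl <;>
      exact ⟨_, _, _, rfl, ⟨by decide, by decide, by decide⟩, ⟨by decide, by decide, by decide⟩,
        ⟨by decide, by decide, by decide⟩⟩

lemma addApex_adj {G : SimpleGraph ℕ} {v a b c x y : ℕ}
    (hva : v ≠ a) (hvb : v ≠ b) (hvc : v ≠ c) :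
    (addApex G v a b c).Adj x y ↔ G.Adj x y ∨
      (x = v ∧ (y = a ∨ y = b ∨ y = c)) ∨ (y = v ∧ (x = a ∨ x = b ∨ x = c)) := by
  simp only [addApex, SimpleGraph.sup_adj, SimpleGraph.fromEdgeSet_adj,
    Set.mem_insert_iff, Set.mem_singleton_iff, Sym2.eq, Sym2.rel_iff', Prod.mk.injEq,
    Prod.swap_prod_mk]
  constructor
  · rintro (h | ⟨(⟨rfl,rfl⟩|⟨rfl,rfl⟩) | (⟨rfl,rfl⟩|⟨rfl,rfl⟩) | (⟨rfl,rfl⟩|⟨rfl,rfl⟩), hne⟩) <;>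
      tauto
  · rintro (h | ⟨rfl, rfl|rfl|rfl⟩ | ⟨rfl, rfl|rfl|rfl⟩) <;> tauto

lemma apex_nbr {G : SimpleGraph ℕ} {v a b c y : ℕ} (hv : ∀ y, ¬ G.Adj v y)
    (hva : v ≠ a) (hvb : v ≠ b) (hvc : v ≠ c)
    (h : (addApex G v a b c).Adj v y) : y = a ∨ y = b ∨ y = c := by
  rw [addApex_adj hva hvb hvc] at h
  rcases h with h | ⟨-, h⟩ | ⟨rfl, h⟩
  · exact absurd h (hv y)
  · exact h
  · rcases h with h | h | h
    exacts [absurd h hva, absurd h hvb, absurd h hvc]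

lemma mem_three {v a b c y z : ℕ} (hy : y = a ∨ y = b ∨ y = c) (hz : z = a ∨ z = b ∨ z = c)
    (hyz : y ≠ z) :
    ({v, y, z} : Finset ℕ) ∈ ({{v,a,b},{v,a,c},{v,b,c}} : Set (Finset ℕ)) := by
  have pc : ∀ p q : ℕ, ({v, p, q} : Finset ℕ) = {v, q, p} := fun p q => by
    rw [Finset.pair_comm]
  rcases hy with rfl | rfl | rfl <;> rcases hz with rfl | rfl | rfl <;>
    simp only [Set.mem_insert_iff, Set.mem_singleton_iff] <;>
    first
      | exact absurd rfl hyz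
      | exact Or.inl rfl
      | exact Or.inr (Or.inl rfl)
      | exact Or.inr (Or.inr rfl)
      | exact Or.inl (pc y z)
      | exact Or.inr (Or.inl (pc y z))
      | exact Or.inr (Or.inr (pc y z))
      | exact Or.inl trivial
      | exact Or.inr (Or.inl trivial)
      | exact Or.inr (Or.inr trivial)

lemma apollo_main {G : SimpleGraph ℕ} {Fs : Set (Finset ℕ)} (h : ApollonianF G Fs) :
    G.support.Finite ∧ 4 ≤ G.support.ncard ∧
    (∀ t ∈ Fs, t ∈ triangleSet G) ∧ (triangleSet G).Finite ∧
    (triangleSet G).ncard = 3 * G.support.ncard - 8 := by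
  induction h with
  | base =>
    refine ⟨?_, ?_, ?_, ?_, ?_⟩
    · rw [K4n_support]; exact (Finset.range 4).finite_toSet
    · rw [K4n_support, Set.ncard_coe_finset, Finset.card_range]
    · intro t ht
      rw [triangleSet_K4n]
      simp only [Set.mem_insert_iff, Set.mem_singleton_iff] at ht
      rcases ht with rfl | rfl | rfl | rfl <;> decide
    · rw [triangleSet_K4n]; exact Finset.finite_toSet _
    · rw [triangleSet_K4n, K4n_support, Set.ncard_coe_finset, Set.ncard_coe_finset,
        Finset.card_range]
      decide
  | subdivide G Fs a b c v hA hmem hv ih =>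
    obtain ⟨hfin, h4, hfaces, htfin, hcount⟩ := ih
    have htri := hfaces _ hmem
    obtain ⟨hab, hac, hbc⟩ := triangle_adj' htri
    have hva : v ≠ a := fun e => hv b (e ▸ hab)
    have hvb : v ≠ b := fun e => hv a (e ▸ hab.symm)
    have hvc : v ≠ c := fun e => hv a (e ▸ hac.symm)
    have hvnot : v ∉ G.support := fun ⟨y, hy⟩ => hv y hy
    have lift : ∀ {x y : ℕ}, G.Adj x y → (addApex G v a b c).Adj x y := fun h =>
      (addApex_adj hva hvb hvc).mpr (Or.inl h)
    have hAva : (addApex G v a b c).Adj v a :=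
      (addApex_adj hva hvb hvc).mpr (Or.inr (Or.inl ⟨rfl, Or.inl rfl⟩))
    have hAvb : (addApex G v a b c).Adj v b :=
      (addApex_adj hva hvb hvc).mpr (Or.inr (Or.inl ⟨rfl, Or.inr (Or.inl rfl)⟩))
    have hAvc : (addApex G v a b c).Adj v c :=
      (addApex_adj hva hvb hvc).mpr (Or.inr (Or.inl ⟨rfl, Or.inr (Or.inr rfl)⟩))
    have hsupp : (addApex G v a b c).support = insert v G.support := by
      ext x
      simp only [SimpleGraph.mem_support, Set.mem_insert_iff]
      constructor
      · rintro ⟨y, hy⟩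
        rw [addApex_adj hva hvb hvc] at hy
        rcases hy with h | ⟨rfl, -⟩ | ⟨-, h⟩
        · exact Or.inr ⟨y, h⟩
        · exact Or.inl rfl
        · rcases h with rfl | rfl | rfl
          · exact Or.inr ⟨b, hab⟩
          · exact Or.inr ⟨a, hab.symm⟩
          · exact Or.inr ⟨a, hac.symm⟩
      · rintro (rfl | ⟨y, hy⟩)
        · exact ⟨a, hAva⟩
        · exact ⟨y, lift hy⟩
    have hTs : triangleSet (addApex G v a b c) =
        triangleSet G ∪ {{v,a,b},{v,a,c},{v,b,c}} := by
      ext t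
      constructor
      · rintro ⟨x, y, z, rfl, h1, h2, h3⟩
        by_cases hxv : x = v
        · subst hxv
          exact Or.inr (mem_three (apex_nbr hv hva hvb hvc h1)
            (apex_nbr hv hva hvb hvc h2) h3.ne)
        · by_cases hyv : y = v
          · subst hyv
            right
            have e : ({x, y, z} : Finset ℕ) = {y, x, z} := Finset.insert_comm x y {z}
            rw [e]
            exact mem_three (apex_nbr hv hva hvb hvc h1.symm)
              (apex_nbr hv hva hvb hvc h3) h2.ne
          · by_cases hzv : z = v
            · subst hzv
              right
              have e : ({x, y, z} : Finset ℕ) = {z, x, y} := by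
                rw [show ({y, z} : Finset ℕ) = {z, y} from Finset.pair_comm y z]
                exact Finset.insert_comm x z {y}
              rw [e]
              exact mem_three (apex_nbr hv hva hvb hvc h2.symm)
                (apex_nbr hv hva hvb hvc h3.symm) h1.ne
            · left
              rw [addApex_adj hva hvb hvc] at h1 h2 h3
              refine ⟨x, y, z, rfl, ?_, ?_, ?_⟩
              · rcases h1 with h | ⟨h, -⟩ | ⟨h, -⟩
                exacts [h, absurd h hxv, absurd h hyv]
              · rcases h2 with h | ⟨h, -⟩ | ⟨h, -⟩
                exacts [h, absurd h hxv, absurd h hzv]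
              · rcases h3 with h | ⟨h, -⟩ | ⟨h, -⟩
                exacts [h, absurd h hyv, absurd h hzv]
      · intro ht
        rcases ht with ht | ht
        · obtain ⟨x, y, z, rfl, h1, h2, h3⟩ := ht
          exact ⟨x, y, z, rfl, lift h1, lift h2, lift h3⟩
        · simp only [Set.mem_insert_iff, Set.mem_singleton_iff] at ht
          rcases ht with rfl | rfl | rfl
          · exact ⟨v, a, b, rfl, hAva, hAvb, lift hab⟩
          · exact ⟨v, a, c, rfl, hAva, hAvc, lift hac⟩
          · exact ⟨v, b, c, rfl, hAvb, hAvc, lift hbc⟩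
    have d1 : ({v,a,b} : Finset ℕ) ≠ {v,a,c} := by
      intro e
      have hc : c ∈ ({v,a,b} : Finset ℕ) := by rw [e]; simp
      simp only [Finset.mem_insert, Finset.mem_singleton] at hc
      rcases hc with h | h | h
      exacts [hvc h.symm, hac.ne h.symm, hbc.ne h.symm]
    have d2 : ({v,a,b} : Finset ℕ) ≠ {v,b,c} := by
      intro e
      have hc : c ∈ ({v,a,b} : Finset ℕ) := by rw [e]; simp
      simp only [Finset.mem_insert, Finset.mem_singleton] at hc
      rcases hc with h | h | h
      exacts [hvc h.symm, hac.ne h.symm, hbc.ne h.symm]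
    have d3 : ({v,a,c} : Finset ℕ) ≠ {v,b,c} := by
      intro e
      have hb : b ∈ ({v,a,c} : Finset ℕ) := by rw [e]; simp
      simp only [Finset.mem_insert, Finset.mem_singleton] at hb
      rcases hb with h | h | h
      exacts [hvb h.symm, hab.ne h.symm, hbc.ne h]
    have hScoe : ({{v,a,b},{v,a,c},{v,b,c}} : Set (Finset ℕ)) =
        ↑({{v,a,b},{v,a,c},{v,b,c}} : Finset (Finset ℕ)) := by simp
    have hSfin : ({{v,a,b},{v,a,c},{v,b,c}} : Set (Finset ℕ)).Finite := by
      rw [hScoe]; exact Finset.finite_toSet _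
    have hScard : ({{v,a,b},{v,a,c},{v,b,c}} : Set (Finset ℕ)).ncard = 3 := by
      rw [hScoe, Set.ncard_coe_finset,
        Finset.card_insert_of_notMem (by simp [d1, d2]),
        Finset.card_insert_of_notMem (by simp [d3]), Finset.card_singleton]
    have hdisj : Disjoint (triangleSet G) ({{v,a,b},{v,a,c},{v,b,c}} : Set (Finset ℕ)) := by
      rw [Set.disjoint_left]
      intro t ht htS
      have hvt : v ∈ t := by
        simp only [Set.mem_insert_iff, Set.mem_singleton_iff] at htS
        rcases htS with rfl | rfl | rfl <;> simp
      exact hvnot (triangle_mem_support ht v hvt)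
    have hsc : (addApex G v a b c).support.ncard = G.support.ncard + 1 := by
      rw [hsupp, Set.ncard_insert_of_notMem hvnot hfin]
    refine ⟨?_, ?_, ?_, ?_, ?_⟩
    · rw [hsupp]; exact hfin.insert v
    · rw [hsc]; omega
    · intro t ht
      rw [hTs]
      rcases ht with ht | ht
      · exact Or.inl (hfaces t ht.1)
      · exact Or.inr ht
    · rw [hTs]; exact htfin.union hSfin
    · rw [hTs, Set.ncard_union_eq hdisj htfin hSfin, hcount, hScard, hsc]
      omega

/-- An Apollonian network with `n` vertices contains exactly `3n - 8`
triangles. -/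
theorem stmt_0 (G : SimpleGraph ℕ) (hG : IsApollonian G) (n : ℕ)
    (hn : G.support.ncard = n) :
    (triangleSet G).ncard = 3 * n - 8 := by
  obtain ⟨Fs, h⟩ := hG
  obtain ⟨-, -, -, -, hcount⟩ := apollo_main h
  rw [hcount, hn]
end

section
/- For every natural number n ≥ 4, the planar triangulation T_n constructed below on 2n + 5 vertices has trivial automorphism group. -/
open SimpleGraph

def IsCubicN (G : SimpleGraph ℕ) : Prop :=
  ∀ v ∈ G.support, (G.neighborSet v).ncard = 3

def CyclicallyEdgeConnectedN (G : SimpleGraph ℕ) (k : ℕ) : Prop :=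
  ¬ ∃ A : Finset (Sym2 ℕ), ↑A ⊆ G.edgeSet ∧ A.card < k ∧
    ∃ u u' : ℕ, (∃ c : (G.deleteEdges ↑A).Walk u u, c.IsCycle) ∧
      (∃ c : (G.deleteEdges ↑A).Walk u' u', c.IsCycle) ∧
      ¬ (G.deleteEdges ↑A).Reachable u u'

/-- The result of splitting the cyclic edge cut `S`: delete the edges of `S` and
join a new vertex `v` to `v1,v2,v3` and a new vertex `w` to `w1,w2,w3`. -/
def splitGraph (G : SimpleGraph ℕ) (S : Set (Sym2 ℕ)) (v w v1 v2 v3 w1 w2 w3 : ℕ) :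
    SimpleGraph ℕ :=
  (G.deleteEdges S) ⊔
    SimpleGraph.fromEdgeSet {s(v, v1), s(v, v2), s(v, v3), s(w, w1), s(w, w2), s(w, w3)}

/-- The hypotheses of the splitting operation: `{{v1,w1},{v2,w2},{v3,w3}}` is a cyclic
edge cut of size three of `G`, with `v1,v2,v3` in one component and `w1,w2,w3` in the
other component after deletion, and `v`, `w` are new vertices. -/
structure IsSplitting (G : SimpleGraph ℕ) (v w v1 v2 v3 w1 w2 w3 : ℕ) : Prop where
  sub : ({s(v1, w1), s(v2, w2), s(v3, w3)} : Set (Sym2 ℕ)) ⊆ G.edgeSet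
  card3 : ({s(v1, w1), s(v2, w2), s(v3, w3)} : Finset (Sym2 ℕ)).card = 3
  cyc1 : ∃ u : ℕ,
    (G.deleteEdges {s(v1, w1), s(v2, w2), s(v3, w3)}).Reachable v1 u ∧
    ∃ c : (G.deleteEdges {s(v1, w1), s(v2, w2), s(v3, w3)}).Walk u u, c.IsCycle
  cyc2 : ∃ u : ℕ,
    (G.deleteEdges {s(v1, w1), s(v2, w2), s(v3, w3)}).Reachable w1 u ∧
    ∃ c : (G.deleteEdges {s(v1, w1), s(v2, w2), s(v3, w3)}).Walk u u, c.IsCycle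
  reachv2 : (G.deleteEdges {s(v1, w1), s(v2, w2), s(v3, w3)}).Reachable v1 v2
  reachv3 : (G.deleteEdges {s(v1, w1), s(v2, w2), s(v3, w3)}).Reachable v1 v3
  reachw2 : (G.deleteEdges {s(v1, w1), s(v2, w2), s(v3, w3)}).Reachable w1 w2
  reachw3 : (G.deleteEdges {s(v1, w1), s(v2, w2), s(v3, w3)}).Reachable w1 w3
  sep : ¬ (G.deleteEdges {s(v1, w1), s(v2, w2), s(v3, w3)}).Reachable v1 w1
  freshv : ∀ y, ¬ G.Adj v y
  freshw : ∀ y, ¬ G.Adj w y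
  vw : v ≠ w

/-- The connected component of `a` in `G`, as a graph on `ℕ`. -/
def componentOf (G : SimpleGraph ℕ) (a : ℕ) : SimpleGraph ℕ where
  Adj x y := G.Adj x y ∧ G.Reachable a x ∧ G.Reachable a y
  symm := ⟨fun _ _ h => ⟨h.1.symm, h.2.2, h.2.1⟩⟩
  loopless := ⟨fun x h => G.loopless.irrefl x h.1⟩

/-- `IsC4CDecomp G l` : `l` is the C4C-decomposition of `G`, obtained by recursively
splitting cyclic edge cuts of size three until every component is `K4` or cyclically
4-edge connected. -/
inductive IsC4CDecomp : SimpleGraph ℕ → List (SimpleGraph ℕ) → Prop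
  | leaf (G : SimpleGraph ℕ) :
      (IsK4Graph G ∨ CyclicallyEdgeConnectedN G 4) → IsC4CDecomp G [G]
  | split (G : SimpleGraph ℕ) (v w v1 v2 v3 w1 w2 w3 : ℕ)
      (l1 l2 : List (SimpleGraph ℕ)) :
      IsSplitting G v w v1 v2 v3 w1 w2 w3 →
      IsC4CDecomp (componentOf
        (splitGraph G {s(v1, w1), s(v2, w2), s(v3, w3)} v w v1 v2 v3 w1 w2 w3) v) l1 →
      IsC4CDecomp (componentOf
        (splitGraph G {s(v1, w1), s(v2, w2), s(v3, w3)} v w v1 v2 v3 w1 w2 w3) w) l2 →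
      IsC4CDecomp G (l1 ++ l2)

/-- The planar triangulation `T_n`: a cycle `v_1 … v_{2n}` (on vertices `1,…,2n`),
two hubs `2n+1`, `2n+2` joined to all cycle vertices, and the three extra vertices
`w_1 = 2n+3` (joined to `1, 2, 2n+1`), `w_2 = 2n+4` (joined to `1, 2, 2n+3`) and
`w_3 = 2n+5` (joined to `2, 3, 2n+1`). -/
def Tn (n : ℕ) : SimpleGraph ℕ :=
  SimpleGraph.fromEdgeSet (
    {e | ∃ i, 1 ≤ i ∧ i < 2 * n ∧ e = s(i, i + 1)} ∪ {s(2 * n, 1)} ∪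
    {e | ∃ i, 1 ≤ i ∧ i ≤ 2 * n ∧ (e = s(2 * n + 1, i) ∨ e = s(2 * n + 2, i))} ∪
    {s(2 * n + 3, 1), s(2 * n + 3, 2), s(2 * n + 3, 2 * n + 1),
     s(2 * n + 4, 1), s(2 * n + 4, 2), s(2 * n + 4, 2 * n + 3),
     s(2 * n + 5, 2), s(2 * n + 5, 3), s(2 * n + 5, 2 * n + 1)})

def nbrs (n a : ℕ) : Finset ℕ :=
  if a = 1 then {2, 2*n, 2*n+1, 2*n+2, 2*n+3, 2*n+4}
  else if a = 2 then {1, 3, 2*n+1, 2*n+2, 2*n+3, 2*n+4, 2*n+5}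
  else if a = 3 then {2, 4, 2*n+1, 2*n+2, 2*n+5}
  else if 4 ≤ a ∧ a < 2*n then {a-1, a+1, 2*n+1, 2*n+2}
  else if a = 2*n then {2*n-1, 1, 2*n+1, 2*n+2}
  else if a = 2*n+1 then (Finset.Icc 1 (2*n)) ∪ {2*n+3, 2*n+5}
  else if a = 2*n+2 then Finset.Icc 1 (2*n)
  else if a = 2*n+3 then {1, 2, 2*n+1, 2*n+4}
  else if a = 2*n+4 then {1, 2, 2*n+3}
  else if a = 2*n+5 then {2, 3, 2*n+1}
  else ∅

set_option maxHeartbeats 4000000 in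
theorem adj_iff (n : ℕ) (hn : 4 ≤ n) (a b : ℕ) : (Tn n).Adj a b ↔ b ∈ nbrs n a := by
  rw [Tn, fromEdgeSet_adj]
  simp only [Set.mem_union, Set.mem_setOf_eq, Set.mem_insert_iff, Set.mem_singleton_iff,
    Sym2.eq_iff]
  simp only [nbrs]
  split_ifs with h1 h2 h3 h4 h5 h6 h7 h8 h9 h10 <;>
    simp only [Finset.mem_insert, Finset.mem_singleton, Finset.mem_union, Finset.mem_Icc,
      Finset.notMem_empty, iff_false]
  case _ =>
    constructor
    · rintro ⟨(((⟨i, hi⟩ | hX) | ⟨i, hi⟩) | hY), hne⟩ <;> omega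
    · intro hb
      refine ⟨?_, by omega⟩
      rcases hb with h | h | h | h | h | h
      · exact Or.inl (Or.inl (Or.inl ⟨min a b, by omega⟩))
      · exact Or.inl (Or.inl (Or.inr (by omega)))
      · exact Or.inl (Or.inr ⟨min a b, by omega⟩)
      · exact Or.inl (Or.inr ⟨min a b, by omega⟩)
      · exact Or.inr (Or.inl (by omega))
      · exact Or.inr (Or.inr (Or.inr (Or.inr (Or.inl (by omega)))))
  case _ =>
    constructor
    · rintro ⟨(((⟨i, hi⟩ | hX) | ⟨i, hi⟩) | hY), hne⟩ <;> omega
    · intro hb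
      refine ⟨?_, by omega⟩
      rcases hb with h | h | h | h | h | h | h
      · exact Or.inl (Or.inl (Or.inl ⟨min a b, by omega⟩))
      · exact Or.inl (Or.inl (Or.inl ⟨min a b, by omega⟩))
      · exact Or.inl (Or.inr ⟨min a b, by omega⟩)
      · exact Or.inl (Or.inr ⟨min a b, by omega⟩)
      · exact Or.inr (Or.inr (Or.inl (by omega)))
      · exact Or.inr (Or.inr (Or.inr (Or.inr (Or.inr (Or.inl (by omega))))))
      · exact Or.inr (Or.inr (Or.inr (Or.inr (Or.inr (Or.inr (Or.inr (Or.inl (by omega))))))))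
  case _ =>
    constructor
    · rintro ⟨(((⟨i, hi⟩ | hX) | ⟨i, hi⟩) | hY), hne⟩ <;> omega
    · intro hb
      refine ⟨?_, by omega⟩
      rcases hb with h | h | h | h | h
      · exact Or.inl (Or.inl (Or.inl ⟨min a b, by omega⟩))
      · exact Or.inl (Or.inl (Or.inl ⟨min a b, by omega⟩))
      · exact Or.inl (Or.inr ⟨min a b, by omega⟩)
      · exact Or.inl (Or.inr ⟨min a b, by omega⟩)
      · exact Or.inr (Or.inr (Or.inr (Or.inr (Or.inr (Or.inr (Or.inr (Or.inr (Or.inl (by omega)))))))))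
  case _ =>
    constructor
    · rintro ⟨(((⟨i, hi⟩ | hX) | ⟨i, hi⟩) | hY), hne⟩ <;> omega
    · intro hb
      refine ⟨?_, by omega⟩
      rcases hb with h | h | h | h
      · exact Or.inl (Or.inl (Or.inl ⟨min a b, by omega⟩))
      · exact Or.inl (Or.inl (Or.inl ⟨min a b, by omega⟩))
      · exact Or.inl (Or.inr ⟨min a b, by omega⟩)
      · exact Or.inl (Or.inr ⟨min a b, by omega⟩)
  case _ =>
    constructor
    · rintro ⟨(((⟨i, hi⟩ | hX) | ⟨i, hi⟩) | hY), hne⟩ <;> omega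
    · intro hb
      refine ⟨?_, by omega⟩
      rcases hb with h | h | h | h
      · exact Or.inl (Or.inl (Or.inl ⟨min a b, by omega⟩))
      · exact Or.inl (Or.inl (Or.inr (by omega)))
      · exact Or.inl (Or.inr ⟨min a b, by omega⟩)
      · exact Or.inl (Or.inr ⟨min a b, by omega⟩)
  case _ =>
    constructor
    · rintro ⟨(((⟨i, hi⟩ | hX) | ⟨i, hi⟩) | hY), hne⟩ <;> omega
    · intro hb
      refine ⟨?_, by omega⟩
      rcases hb with h | h | h
      · exact Or.inl (Or.inr ⟨min a b, by omega⟩)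
      · exact Or.inr (Or.inr (Or.inr (Or.inl (by omega))))
      · exact Or.inr (Or.inr (Or.inr (Or.inr (Or.inr (Or.inr (Or.inr (Or.inr (Or.inr (by omega)))))))))
  case _ =>
    constructor
    · rintro ⟨(((⟨i, hi⟩ | hX) | ⟨i, hi⟩) | hY), hne⟩ <;> omega
    · intro hb
      exact ⟨Or.inl (Or.inr ⟨min a b, by omega⟩), by omega⟩
  case _ =>
    constructor
    · rintro ⟨(((⟨i, hi⟩ | hX) | ⟨i, hi⟩) | hY), hne⟩ <;> omega
    · intro hb
      refine ⟨?_, by omega⟩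
      rcases hb with h | h | h | h
      · exact Or.inr (Or.inl (by omega))
      · exact Or.inr (Or.inr (Or.inl (by omega)))
      · exact Or.inr (Or.inr (Or.inr (Or.inl (by omega))))
      · exact Or.inr (Or.inr (Or.inr (Or.inr (Or.inr (Or.inr (Or.inl (by omega)))))))
  case _ =>
    constructor
    · rintro ⟨(((⟨i, hi⟩ | hX) | ⟨i, hi⟩) | hY), hne⟩ <;> omega
    · intro hb
      refine ⟨?_, by omega⟩
      rcases hb with h | h | h
      · exact Or.inr (Or.inr (Or.inr (Or.inr (Or.inl (by omega)))))
      · exact Or.inr (Or.inr (Or.inr (Or.inr (Or.inr (Or.inl (by omega))))))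
      · exact Or.inr (Or.inr (Or.inr (Or.inr (Or.inr (Or.inr (Or.inl (by omega)))))))
  case _ =>
    constructor
    · rintro ⟨(((⟨i, hi⟩ | hX) | ⟨i, hi⟩) | hY), hne⟩ <;> omega
    · intro hb
      refine ⟨?_, by omega⟩
      rcases hb with h | h | h
      · exact Or.inr (Or.inr (Or.inr (Or.inr (Or.inr (Or.inr (Or.inr (Or.inl (by omega))))))))
      · exact Or.inr (Or.inr (Or.inr (Or.inr (Or.inr (Or.inr (Or.inr (Or.inr (Or.inl (by omega)))))))))
      · exact Or.inr (Or.inr (Or.inr (Or.inr (Or.inr (Or.inr (Or.inr (Or.inr (Or.inr (by omega)))))))))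
  case _ =>
    rintro ⟨(((⟨i, hi⟩ | hX) | ⟨i, hi⟩) | hY), hne⟩ <;> omega

set_option maxHeartbeats 2000000 in
lemma card_nbrs (n y : ℕ) (hn : 4 ≤ n) : (nbrs n y).card =
    if y = 1 then 6 else if y = 2 then 7 else if y = 3 then 5
    else if 4 ≤ y ∧ y ≤ 2*n then 4 else if y = 2*n+1 then 2*n+2
    else if y = 2*n+2 then 2*n else if y = 2*n+3 then 4
    else if y = 2*n+4 then 3 else if y = 2*n+5 then 3 else 0 := by
  simp only [nbrs]
  split_ifs <;> try (exfalso; omega)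
  · rw [Finset.card_insert_of_notMem (by simp only [Finset.mem_insert, Finset.mem_singleton]; omega),
      Finset.card_insert_of_notMem (by simp only [Finset.mem_insert, Finset.mem_singleton]; omega),
      Finset.card_insert_of_notMem (by simp only [Finset.mem_insert, Finset.mem_singleton]; omega),
      Finset.card_insert_of_notMem (by simp only [Finset.mem_insert, Finset.mem_singleton]; omega),
      Finset.card_insert_of_notMem (by simp only [Finset.mem_singleton]; omega),
      Finset.card_singleton]
  · rw [Finset.card_insert_of_notMem (by simp only [Finset.mem_insert, Finset.mem_singleton]; omega),
      Finset.card_insert_of_notMem (by simp only [Finset.mem_insert, Finset.mem_singleton]; omega),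
      Finset.card_insert_of_notMem (by simp only [Finset.mem_insert, Finset.mem_singleton]; omega),
      Finset.card_insert_of_notMem (by simp only [Finset.mem_insert, Finset.mem_singleton]; omega),
      Finset.card_insert_of_notMem (by simp only [Finset.mem_insert, Finset.mem_singleton]; omega),
      Finset.card_insert_of_notMem (by simp only [Finset.mem_singleton]; omega),
      Finset.card_singleton]
  · rw [Finset.card_insert_of_notMem (by simp only [Finset.mem_insert, Finset.mem_singleton]; omega),
      Finset.card_insert_of_notMem (by simp only [Finset.mem_insert, Finset.mem_singleton]; omega),
      Finset.card_insert_of_notMem (by simp only [Finset.mem_insert, Finset.mem_singleton]; omega),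
      Finset.card_insert_of_notMem (by simp only [Finset.mem_singleton]; omega),
      Finset.card_singleton]
  · rw [Finset.card_insert_of_notMem (by simp only [Finset.mem_insert, Finset.mem_singleton]; omega),
      Finset.card_insert_of_notMem (by simp only [Finset.mem_insert, Finset.mem_singleton]; omega),
      Finset.card_insert_of_notMem (by simp only [Finset.mem_singleton]; omega),
      Finset.card_singleton]
  · rw [Finset.card_insert_of_notMem (by simp only [Finset.mem_insert, Finset.mem_singleton]; omega),
      Finset.card_insert_of_notMem (by simp only [Finset.mem_insert, Finset.mem_singleton]; omega),
      Finset.card_insert_of_notMem (by simp only [Finset.mem_singleton]; omega),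
      Finset.card_singleton]
  · rw [Finset.card_union_of_disjoint (by
        rw [Finset.disjoint_left]
        intro a ha hb
        simp only [Finset.mem_Icc] at ha
        simp only [Finset.mem_insert, Finset.mem_singleton] at hb
        omega),
      Nat.card_Icc,
      Finset.card_insert_of_notMem (by simp only [Finset.mem_singleton]; omega),
      Finset.card_singleton]
    omega
  · rw [Nat.card_Icc]; omega
  · rw [Finset.card_insert_of_notMem (by simp only [Finset.mem_insert, Finset.mem_singleton]; omega),
      Finset.card_insert_of_notMem (by simp only [Finset.mem_insert, Finset.mem_singleton]; omega),
      Finset.card_insert_of_notMem (by simp only [Finset.mem_singleton]; omega),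
      Finset.card_singleton]
  · rw [Finset.card_insert_of_notMem (by simp only [Finset.mem_insert, Finset.mem_singleton]; omega),
      Finset.card_insert_of_notMem (by simp only [Finset.mem_singleton]; omega),
      Finset.card_singleton]
  · rw [Finset.card_insert_of_notMem (by simp only [Finset.mem_insert, Finset.mem_singleton]; omega),
      Finset.card_insert_of_notMem (by simp only [Finset.mem_singleton]; omega),
      Finset.card_singleton]
  · exact Finset.card_empty

set_option maxHeartbeats 1000000 in
lemma nbrs_empty (n x : ℕ) (hn : 4 ≤ n) (hx : ¬(1 ≤ x ∧ x ≤ 2*n+5)) : nbrs n x = ∅ := by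
  simp only [nbrs]; split_ifs <;> first | (exfalso; omega) | rfl

set_option maxHeartbeats 2000000 in
lemma mem_support_iff (n : ℕ) (hn : 4 ≤ n) (x : ℕ) :
    x ∈ (Tn n).support ↔ 1 ≤ x ∧ x ≤ 2*n+5 := by
  rw [SimpleGraph.mem_support]
  constructor
  · rintro ⟨w, hw⟩
    by_contra hx
    rw [adj_iff n hn, nbrs_empty n x hn hx] at hw
    exact absurd hw (Finset.notMem_empty w)
  · intro hx
    by_cases h : x ≤ 2*n
    · refine ⟨2*n+1, (adj_iff n hn _ _).mpr ?_⟩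
      simp only [nbrs]; split_ifs <;>
        simp only [Finset.mem_insert, Finset.mem_singleton, Finset.mem_union, Finset.mem_Icc,
          Finset.notMem_empty, or_true, true_or] <;> omega
    · refine ⟨2, (adj_iff n hn _ _).mpr ?_⟩
      simp only [nbrs]; split_ifs <;>
        simp only [Finset.mem_insert, Finset.mem_singleton, Finset.mem_union, Finset.mem_Icc,
          Finset.notMem_empty, or_true, true_or] <;> omega

set_option maxHeartbeats 1000000 in
lemma deg_phi (n : ℕ) (hn : 4 ≤ n) (φ : Tn n ≃g Tn n) (x : ℕ) :
    (nbrs n (φ x)).card = (nbrs n x).card := by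
  have hset : ∀ z : ℕ, (Tn n).neighborSet z = ↑(nbrs n z) := by
    intro z
    ext y
    rw [SimpleGraph.mem_neighborSet, adj_iff n hn, Finset.mem_coe]
  have h2 : (Tn n).neighborSet (φ x) = φ '' (Tn n).neighborSet x := by
    ext y
    simp only [SimpleGraph.mem_neighborSet, Set.mem_image]
    constructor
    · intro h
      refine ⟨φ.symm y, ?_, φ.apply_symm_apply y⟩
      rw [← φ.apply_symm_apply y] at h
      exact φ.map_adj_iff.mp h
    · rintro ⟨z, hz, rfl⟩
      exact φ.map_adj_iff.mpr hz
  calc (nbrs n (φ x)).card = ((nbrs n (φ x) : Finset ℕ) : Set ℕ).ncard :=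
        (Set.ncard_coe_finset _).symm
    _ = ((Tn n).neighborSet (φ x)).ncard := by rw [hset]
    _ = (φ '' (Tn n).neighborSet x).ncard := by rw [h2]
    _ = ((Tn n).neighborSet x).ncard := Set.ncard_image_of_injective _ φ.injective
    _ = (nbrs n x).card := by rw [hset, Set.ncard_coe_finset]

set_option maxHeartbeats 8000000 in
/-- For `n ≥ 4`, the planar triangulation `T_n` (on `2n + 5` vertices)
has trivial automorphism group: every automorphism fixes each vertex. -/
theorem stmt_15 (n : ℕ) (hn : 4 ≤ n) (φ : Tn n ≃g Tn n) :
    ∀ x ∈ (Tn n).support, φ x = x := by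
  have hrange : ∀ z : ℕ, 1 ≤ z → z ≤ 2*n+5 → 1 ≤ φ z ∧ φ z ≤ 2*n+5 := by
    intro z h1 h2
    rw [← mem_support_iff n hn, SimpleGraph.mem_support]
    obtain ⟨w, hw⟩ := ((Tn n).mem_support).mp ((mem_support_iff n hn z).mpr ⟨h1, h2⟩)
    exact ⟨φ w, φ.map_adj_iff.mpr hw⟩
  have back : ∀ y, 1 ≤ y → y ≤ 2*n+5 →
      ((nbrs n y).card = 7 → y = 2) ∧ ((nbrs n y).card = 6 → y = 1) ∧
      ((nbrs n y).card = 5 → y = 3) ∧ ((nbrs n y).card = 2*n+2 → y = 2*n+1) ∧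
      ((nbrs n y).card = 2*n → y = 2*n+2) ∧
      ((nbrs n y).card = 3 → y = 2*n+4 ∨ y = 2*n+5) := by
    intro y h1 h2
    rw [card_nbrs n y hn]
    split_ifs <;> omega
  have hval : ∀ z c : ℕ, 1 ≤ z → z ≤ 2*n+5 →
      ((nbrs n z).card = c ↔ (nbrs n z).card = c) := fun _ _ _ _ => Iff.rfl
  have cardz : ∀ z : ℕ, (nbrs n z).card =
      (if z = 1 then 6 else if z = 2 then 7 else if z = 3 then 5
      else if 4 ≤ z ∧ z ≤ 2*n then 4 else if z = 2*n+1 then 2*n+2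
      else if z = 2*n+2 then 2*n else if z = 2*n+3 then 4
      else if z = 2*n+4 then 3 else if z = 2*n+5 then 3 else 0) := fun z => card_nbrs n z hn
  have fix2 : φ 2 = 2 := by
    refine (back _ (hrange 2 (by omega) (by omega)).1 (hrange 2 (by omega) (by omega)).2).1 ?_
    rw [deg_phi n hn φ 2, cardz 2]
    split_ifs <;> omega
  have fix1 : φ 1 = 1 := by
    refine (back _ (hrange 1 (by omega) (by omega)).1 (hrange 1 (by omega) (by omega)).2).2.1 ?_
    rw [deg_phi n hn φ 1, cardz 1]
    split_ifs <;> omega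
  have fix3 : φ 3 = 3 := by
    refine (back _ (hrange 3 (by omega) (by omega)).1 (hrange 3 (by omega) (by omega)).2).2.2.1 ?_
    rw [deg_phi n hn φ 3, cardz 3]
    split_ifs <;> omega
  have fixA : φ (2*n+1) = 2*n+1 := by
    refine (back _ (hrange (2*n+1) (by omega) (by omega)).1
      (hrange (2*n+1) (by omega) (by omega)).2).2.2.2.1 ?_
    rw [deg_phi n hn φ (2*n+1), cardz (2*n+1)]
    split_ifs <;> omega
  have fixB : φ (2*n+2) = 2*n+2 := by
    refine (back _ (hrange (2*n+2) (by omega) (by omega)).1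
      (hrange (2*n+2) (by omega) (by omega)).2).2.2.2.2.1 ?_
    rw [deg_phi n hn φ (2*n+2), cardz (2*n+2)]
    split_ifs <;> omega
  -- φ (2n+5) ∈ {2n+4, 2n+5}, but it is adjacent to φ 3 = 3
  have fixw3 : φ (2*n+5) = 2*n+5 := by
    have hmem : φ (2*n+5) = 2*n+4 ∨ φ (2*n+5) = 2*n+5 := by
      refine (back _ (hrange (2*n+5) (by omega) (by omega)).1
        (hrange (2*n+5) (by omega) (by omega)).2).2.2.2.2.2 ?_
      rw [deg_phi n hn φ (2*n+5), cardz (2*n+5)]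
      split_ifs <;> omega
    have hadj : (Tn n).Adj (2*n+5) 3 := by
      rw [adj_iff n hn]
      simp only [nbrs]; split_ifs <;>
        simp only [Finset.mem_insert, Finset.mem_singleton, Finset.mem_union, Finset.mem_Icc,
          Finset.notMem_empty, or_true, true_or] <;> omega
    have hadj2 : (Tn n).Adj (φ (2*n+5)) 3 := by
      have := φ.map_adj_iff.mpr hadj
      rwa [fix3] at this
    rcases hmem with h | h
    · exfalso
      rw [h, adj_iff n hn] at hadj2
      simp only [nbrs] at hadj2
      split_ifs at hadj2 <;>
        simp only [Finset.mem_insert, Finset.mem_singleton, Finset.mem_union, Finset.mem_Icc,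
          Finset.notMem_empty, or_true, true_or] at hadj2 <;> omega
    · exact h
  have fixw2 : φ (2*n+4) = 2*n+4 := by
    have hmem : φ (2*n+4) = 2*n+4 ∨ φ (2*n+4) = 2*n+5 := by
      refine (back _ (hrange (2*n+4) (by omega) (by omega)).1
        (hrange (2*n+4) (by omega) (by omega)).2).2.2.2.2.2 ?_
      rw [deg_phi n hn φ (2*n+4), cardz (2*n+4)]
      split_ifs <;> omega
    rcases hmem with h | h
    · exact h
    · exfalso
      have : (2*n+4 : ℕ) = 2*n+5 := φ.injective (by rw [h, fixw3])
      omega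
  have fixw1 : φ (2*n+3) = 2*n+3 := by
    have hadj : (Tn n).Adj (2*n+4) (2*n+3) := by
      rw [adj_iff n hn]
      simp only [nbrs]; split_ifs <;>
        simp only [Finset.mem_insert, Finset.mem_singleton, Finset.mem_union, Finset.mem_Icc,
          Finset.notMem_empty, or_true, true_or] <;> omega
    have hadj2 : (Tn n).Adj (2*n+4) (φ (2*n+3)) := by
      have := φ.map_adj_iff.mpr hadj
      rwa [fixw2] at this
    rw [adj_iff n hn] at hadj2
    simp only [nbrs] at hadj2
    have e1 : φ (2*n+3) = 1 → (2*n+3 : ℕ) = 1 := fun h => φ.injective (by rw [h, fix1])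
    have e2 : φ (2*n+3) = 2 → (2*n+3 : ℕ) = 2 := fun h => φ.injective (by rw [h, fix2])
    split_ifs at hadj2 <;>
      simp only [Finset.mem_insert, Finset.mem_singleton, Finset.mem_union, Finset.mem_Icc,
        Finset.notMem_empty, or_true, true_or] at hadj2 <;> omega
  -- now the cycle by induction
  have cyc : ∀ d : ℕ, 3 + d ≤ 2*n → φ (3 + d) = 3 + d ∧ φ (2 + d) = 2 + d := by
    intro d
    induction d with
    | zero => intro _; exact ⟨fix3, fix2⟩
    | succ m ih =>
      intro hm
      obtain ⟨hk, hk1⟩ := ih (by omega)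
      refine ⟨?_, by rw [show 2 + (m+1) = 3 + m from by omega]; exact hk⟩
      set k := 3 + m with hkdef
      have hadj : (Tn n).Adj k (k+1) := by
        rw [adj_iff n hn]
        simp only [nbrs]; split_ifs <;>
          simp only [Finset.mem_insert, Finset.mem_singleton, Finset.mem_union, Finset.mem_Icc,
            Finset.notMem_empty, or_true, true_or] <;> omega
      have hadj2 : (Tn n).Adj k (φ (k+1)) := by
        have := φ.map_adj_iff.mpr hadj
        rwa [hk] at this
      rw [adj_iff n hn] at hadj2
      simp only [nbrs] at hadj2
      have e2 : φ (k+1) = 2 → k+1 = 2 := fun h => φ.injective (by rw [h, fix2])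
      have eA : φ (k+1) = 2*n+1 → k+1 = 2*n+1 := fun h => φ.injective (by rw [h, fixA])
      have eB : φ (k+1) = 2*n+2 → k+1 = 2*n+2 := fun h => φ.injective (by rw [h, fixB])
      have eC : φ (k+1) = 2*n+5 → k+1 = 2*n+5 := fun h => φ.injective (by rw [h, fixw3])
      have eD : φ (k+1) = k - 1 → k+1 = k-1 := fun h => φ.injective (by
        rw [h, show k - 1 = 2 + m from by omega, hk1, show 2 + m = k - 1 from by omega])
      have : 3 + (m+1) = k + 1 := by omega
      rw [this]
      split_ifs at hadj2 <;>
        simp only [Finset.mem_insert, Finset.mem_singleton, Finset.mem_union, Finset.mem_Icc,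
          Finset.notMem_empty, or_true, true_or] at hadj2 <;> omega
  intro x hx
  rw [mem_support_iff n hn] at hx
  have hcase : x = 1 ∨ x = 2 ∨ (3 ≤ x ∧ x ≤ 2*n) ∨ x = 2*n+1 ∨ x = 2*n+2 ∨ x = 2*n+3 ∨
      x = 2*n+4 ∨ x = 2*n+5 := by omega
  rcases hcase with rfl | rfl | ⟨h3, h2n⟩ | rfl | rfl | rfl | rfl | rfl
  · exact fix1
  · exact fix2
  · have := (cyc (x - 3) (by omega)).1
    rwa [show 3 + (x - 3) = x from by omega] at this
  · exact fixA
  · exact fixB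
  · exact fixw1
  · exact fixw2
  · exact fixw3
end

section
/- For n ≥ 4 and j ∈ {0,1}, the planar triangulation T_n on 2n+5 vertices contains exactly C(2n, n-j) subgraphs isomorphic to K_{2,n-j} whose partition set of size two is {v_{2n+1}, v_{2n+2}}, and in all these subgraphs the two vertices of the partition set of size two are not adjacent in T_n. -/
open SimpleGraph

/-- For `n ≥ 4` and `j ∈ {0,1}`, the two hubs `2n+1` and `2n+2` of
`T_n` are non-adjacent, and `T_n` contains exactly `C(2n, n-j)` subgraphs isomorphic
to `K_{2,n-j}` with partition set of size two `{2n+1, 2n+2}` (each determined by an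
`(n-j)`-element set of common neighbours of the two hubs). -/
theorem stmt_16 (n : ℕ) (hn : 4 ≤ n) (j : ℕ) (hj : j ≤ 1) :
    ¬ (Tn n).Adj (2 * n + 1) (2 * n + 2) ∧
    {W : Finset ℕ | W.card = n - j ∧
        ∀ x ∈ W, (Tn n).Adj (2 * n + 1) x ∧ (Tn n).Adj (2 * n + 2) x}.ncard
      = Nat.choose (2 * n) (n - j) := by
  have adj2 : ∀ x, (Tn n).Adj (2 * n + 2) x ↔ 1 ≤ x ∧ x ≤ 2 * n := by
    intro x
    constructor
    · intro h
      rw [Tn, SimpleGraph.fromEdgeSet_adj] at h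
      obtain ⟨h, hne⟩ := h
      simp only [Set.mem_union, Set.mem_setOf_eq, Set.mem_insert_iff,
        Set.mem_singleton_iff, Sym2.eq_iff] at h
      rcases h with (((⟨i, h1, h2, h3⟩ | h) | ⟨i, h1, h2, h3⟩) | h) <;> omega
    · rintro ⟨h1, h2⟩
      rw [Tn, SimpleGraph.fromEdgeSet_adj]
      refine ⟨?_, by omega⟩
      exact Or.inl (Or.inr (⟨x, h1, h2, Or.inr rfl⟩))
  have adj1 : ∀ x, 1 ≤ x → x ≤ 2 * n → (Tn n).Adj (2 * n + 1) x := by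
    intro x h1 h2
    rw [Tn, SimpleGraph.fromEdgeSet_adj]
    refine ⟨?_, by omega⟩
    exact Or.inl (Or.inr (⟨x, h1, h2, Or.inl rfl⟩))
  constructor
  · intro h
    have := (adj2 (2 * n + 1)).mp h.symm
    omega
  · have hset : {W : Finset ℕ | W.card = n - j ∧
        ∀ x ∈ W, (Tn n).Adj (2 * n + 1) x ∧ (Tn n).Adj (2 * n + 2) x}
        = ↑((Finset.Icc 1 (2 * n)).powersetCard (n - j)) := by
      ext W
      simp only [Set.mem_setOf_eq, Finset.mem_coe, Finset.mem_powersetCard, Finset.subset_iff, Finset.mem_Icc]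
      constructor
      · rintro ⟨hc, h⟩
        exact ⟨fun x hx => (adj2 x).mp (h x hx).2, hc⟩
      · rintro ⟨hsub, hc⟩
        refine ⟨hc, fun x hx => ?_⟩
        obtain ⟨h1, h2⟩ := hsub hx
        exact ⟨adj1 x h1 h2, (adj2 x).mpr ⟨h1, h2⟩⟩
    rw [hset, Set.ncard_coe_finset, Finset.card_powersetCard, Nat.card_Icc]
    norm_num
end
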